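/- Let λ ∈ [0,1), let W be a propagation matrix, and let Ψ^{(∞)} be a fixed point of the basic cooperative optimization update T_λ. If x̃ is a configuration such that, for every i ∈ {1,…,n}, x̃ globally minimizes the function x ↦ (1−λ) E_i(x) + λ ∑_{j=1}^n w_{ij} Ψ^{(∞)}_j(x_j) over all configurations (i.e., x̃ is a consensus solution at the equilibrium), then x̃ is a global minimum of E: E(x̃) ≤ E(x) for every configuration x. -/

import Mathlib

open Finset Filter Topology

/-- A propagation matrix: nonnegative entries with unit column sums. -/
def IsPropagationMatrix {n : ℕ} (W : Fin n → Fin n → ℝ) : Prop :=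
  (∀ i j, 0 ≤ W i j) ∧ ∀ j, ∑ i, W i j = 1

/-- The basic cooperative optimization update `T_λ`:
`T_λ(Ψ)_i(a) = min_{x : x_i = a} ((1−λ) E_i(x) + λ ∑_j w_{ij} Ψ_j(x_j))`. -/
noncomputable def coopT {n : ℕ} {D : Fin n → Type} [∀ i, Fintype (D i)]
    [∀ i, Nonempty (D i)]
    (E : Fin n → ((i : Fin n) → D i) → ℝ) (W : Fin n → Fin n → ℝ) (lam : ℝ)
    (Ψ : (i : Fin n) → D i → ℝ) : (i : Fin n) → D i → ℝ :=
  fun i a =>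
    Finset.univ.inf' Finset.univ_nonempty
      (fun x : (j : Fin n) → D j =>
        (1 - lam) * E i (Function.update x i a) +
          lam * ∑ j, W i j * Ψ j (Function.update x i a j))

/-- The total objective `E(x) = ∑ i, E_i(x)`. -/
def objective {n : ℕ} {D : Fin n → Type}
    (E : Fin n → ((i : Fin n) → D i) → ℝ) (x : (i : Fin n) → D i) : ℝ :=
  ∑ i, E i x

/-- `x̃` is a consensus solution with respect to the state `Ψ` and cooperation strength
`lam`: for every `i`, `x̃` globally minimizes the modified sub-objective
`x ↦ (1−λ) E_i(x) + λ ∑_j w_{ij} Ψ_j(x_j)`. -/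
def IsConsensusState {n : ℕ} {D : Fin n → Type}
    (E : Fin n → ((i : Fin n) → D i) → ℝ) (W : Fin n → Fin n → ℝ) (lam : ℝ)
    (Ψ : (i : Fin n) → D i → ℝ) (xt : (i : Fin n) → D i) : Prop :=
  ∀ i, ∀ x : (j : Fin n) → D j,
    (1 - lam) * E i xt + lam * ∑ j, W i j * Ψ j (xt j)
      ≤ (1 - lam) * E i x + lam * ∑ j, W i j * Ψ j (x j)

/-- (Theorem 4.4) If `Ψ^{(∞)}` is a fixed point of `T_λ` and `x̃` is a
consensus solution at the equilibrium, then `x̃` is a global minimum of `E`. -/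
theorem consensus_at_equilibrium_global_min (n : ℕ) (hn : 1 ≤ n) (D : Fin n → Type)
    [∀ i, Fintype (D i)] [∀ i, Nonempty (D i)]
    (E : Fin n → ((i : Fin n) → D i) → ℝ) (W : Fin n → Fin n → ℝ)
    (hW : IsPropagationMatrix W) (lam : ℝ) (hlam0 : 0 ≤ lam) (hlam1 : lam < 1)
    (Ψinf : (i : Fin n) → D i → ℝ) (hfix : coopT E W lam Ψinf = Ψinf)
    (xt : (i : Fin n) → D i) (hcons : IsConsensusState E W lam Ψinf xt) :
    ∀ x : (i : Fin n) → D i, objective E xt ≤ objective E x := by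
  obtain ⟨hWpos, hWcol⟩ := hW
  have hfix' : ∀ i a, Ψinf i a = coopT E W lam Ψinf i a := by
    intro i a; rw [hfix]
  have hpos : (0:ℝ) < 1 - lam := by linarith
  -- pointwise upper bound from the fixed point equation
  have hub : ∀ (i : Fin n) (x : (j : Fin n) → D j),
      Ψinf i (x i) ≤ (1 - lam) * E i x + lam * ∑ j, W i j * Ψinf j (x j) := by
    intro i x
    rw [hfix' i (x i)]
    have hx : Function.update x i (x i) = x := Function.update_eq_self i x
    have h := Finset.inf'_le (f := fun y : (j : Fin n) → D j =>
      (1 - lam) * E i (Function.update y i (x i)) +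
        lam * ∑ j, W i j * Ψinf j (Function.update y i (x i) j))
      (b := x) (Finset.mem_univ x)
    simp only [hx] at h; exact h
  -- equality at the consensus point
  have heq : ∀ i, Ψinf i (xt i)
      = (1 - lam) * E i xt + lam * ∑ j, W i j * Ψinf j (xt j) := by
    intro i
    refine le_antisymm (hub i xt) ?_
    rw [hfix' i (xt i)]
    apply Finset.le_inf'
    intro y _
    exact hcons i (Function.update y i (xt i))
  -- swapping the double sum using unit column sums
  have hswap : ∀ x : (j : Fin n) → D j,
      ∑ i, ∑ j, W i j * Ψinf j (x j) = ∑ j, Ψinf j (x j) := by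
    intro x
    rw [Finset.sum_comm]
    simp only [← Finset.sum_mul, hWcol, one_mul]
  intro x
  -- sum of modified objectives at xt
  have h1 : ∑ i, Ψinf i (xt i)
      = (1 - lam) * objective E xt + lam * ∑ j, Ψinf j (xt j) := by
    calc ∑ i, Ψinf i (xt i)
        = ∑ i, ((1 - lam) * E i xt + lam * ∑ j, W i j * Ψinf j (xt j)) :=
          Finset.sum_congr rfl fun i _ => heq i
      _ = (1 - lam) * ∑ i, E i xt + lam * ∑ i, ∑ j, W i j * Ψinf j (xt j) := by
          rw [Finset.sum_add_distrib, ← Finset.mul_sum, ← Finset.mul_sum]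
      _ = _ := by rw [hswap]; rfl
  have hSxt : ∑ j, Ψinf j (xt j) = objective E xt := by
    have h2 : (1 - lam) * (∑ j, Ψinf j (xt j)) = (1 - lam) * objective E xt := by
      nlinarith [h1]
    exact mul_left_cancel₀ hpos.ne' h2
  -- upper bound at x
  have h3 : ∑ i, Ψinf i (x i)
      ≤ (1 - lam) * objective E x + lam * ∑ j, Ψinf j (x j) := by
    calc ∑ i, Ψinf i (x i)
        ≤ ∑ i, ((1 - lam) * E i x + lam * ∑ j, W i j * Ψinf j (x j)) :=
          Finset.sum_le_sum fun i _ => hub i x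
      _ = (1 - lam) * ∑ i, E i x + lam * ∑ i, ∑ j, W i j * Ψinf j (x j) := by
          rw [Finset.sum_add_distrib, ← Finset.mul_sum, ← Finset.mul_sum]
      _ = _ := by rw [hswap]; rfl
  have hSx : ∑ j, Ψinf j (x j) ≤ objective E x := by
    nlinarith [h3]
  -- sum consensus inequalities over i
  have h4 : (1 - lam) * objective E xt + lam * ∑ j, Ψinf j (xt j)
      ≤ (1 - lam) * objective E x + lam * ∑ j, Ψinf j (x j) := by
    have := Finset.sum_le_sum (s := Finset.univ) fun i (_ : i ∈ Finset.univ) => hcons i x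
    calc (1 - lam) * objective E xt + lam * ∑ j, Ψinf j (xt j)
        = ∑ i, ((1 - lam) * E i xt + lam * ∑ j, W i j * Ψinf j (xt j)) := by
          rw [Finset.sum_add_distrib, ← Finset.mul_sum, ← Finset.mul_sum, hswap]; rfl
      _ ≤ ∑ i, ((1 - lam) * E i x + lam * ∑ j, W i j * Ψinf j (x j)) := this
      _ = _ := by
          rw [Finset.sum_add_distrib, ← Finset.mul_sum, ← Finset.mul_sum, hswap]; rfl
  nlinarith [h4, hSxt, mul_le_mul_of_nonneg_left hSx hlam0]
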